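/- Let Ω have N elements and fix t ≥ 1 with 2t ≤ N. The expected value over the uniform probability on E(g,h,N) of the fraction of Ω occupied by points in asymmetric t-cycles of H∘G equals (1/N) · Π_{j=0}^{t-1} (1 - (g-1)/(N-(2j+1))) · (1 - h/(N-2j)), which equals (N^{underline(2t)}/N) · #E(g,h,N-2t)/#E(g,h,N). -/

import Mathlib

open Equiv Function Set

open Filter

/-- The number of fixed points of a permutation of `Fin N`. -/
noncomputable def fixCard {N : ℕ} (σ : Equiv.Perm (Fin N)) : ℕ :=
  Nat.card {x : Fin N // σ x = x}

/-- The set of ordered pairs `(G, H)` of involutions of an `N`-element set with exactly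
`g` and `h` fixed points respectively. -/
def pairE (g h N : ℕ) : Set (Equiv.Perm (Fin N) × Equiv.Perm (Fin N)) :=
  {p | p.1 * p.1 = 1 ∧ p.2 * p.2 = 1 ∧ fixCard p.1 = g ∧ fixCard p.2 = h}

/-- The orbit (cycle) of a point `x` under a permutation `L`. -/
def orb {N : ℕ} (L : Equiv.Perm (Fin N)) (x : Fin N) : Set (Fin N) :=
  {y | ∃ n : ℕ, (L ^ n) x = y}

/-- The number of points of `Fin N` lying on asymmetric (i.e. not `G`-invariant) cycles
of `L = H ∘ G` of length `t`. -/
noncomputable def asymCount (N t : ℕ) (G H : Equiv.Perm (Fin N)) : ℕ :=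
  Nat.card {x : Fin N |
    ⇑G '' orb (H * G) x ≠ orb (H * G) x ∧ Nat.card (orb (H * G) x) = t}


open scoped Classical
set_option linter.unusedSectionVars false
set_option maxHeartbeats 1000000

section Glue
variable {α β : Type*} [Fintype α] [Fintype β]

/-- The canonical equivalence `α ⊕ (range f)ᶜ ≃ β` coming from an embedding `f : α ↪ β`. -/
noncomputable def sumEquiv (f : α ↪ β) : α ⊕ ↥(Set.range ⇑f)ᶜ ≃ β :=
  (Equiv.sumCongr (Equiv.ofInjective f f.injective) (Equiv.refl _)).trans
    (Equiv.Set.sumCompl (Set.range ⇑f))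

@[simp] lemma sumEquiv_inl (f : α ↪ β) (a : α) : sumEquiv f (Sum.inl a) = f a := by
  simp [_root_.sumEquiv]

@[simp] lemma sumEquiv_inr (f : α ↪ β) (b : ↥(Set.range ⇑f)ᶜ) :
    sumEquiv f (Sum.inr b) = ↑b := by
  simp [_root_.sumEquiv]

/-- Glue a permutation of `α` (transported along `f`) with a permutation of the
complement of the range of `f`. -/
noncomputable def glue (f : α ↪ β) (σ : Perm α) (τ : Perm ↥(Set.range ⇑f)ᶜ) : Perm β :=
  (sumEquiv f).permCongr (σ.sumCongr τ)

@[simp] lemma glue_apply_inl (f : α ↪ β) (σ : Perm α) (τ : Perm ↥(Set.range ⇑f)ᶜ) (a : α) :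
    glue f σ τ (f a) = f (σ a) := by
  have h : (sumEquiv f).symm (f a) = Sum.inl a := by
    rw [Equiv.symm_apply_eq, sumEquiv_inl]
  simp [glue, Equiv.permCongr_apply, h]

@[simp] lemma glue_apply_inr (f : α ↪ β) (σ : Perm α) (τ : Perm ↥(Set.range ⇑f)ᶜ)
    (b : ↥(Set.range ⇑f)ᶜ) : glue f σ τ ↑b = ↑(τ b) := by
  have h : (sumEquiv f).symm ↑b = Sum.inr b := by
    rw [Equiv.symm_apply_eq, sumEquiv_inr]
  simp [glue, Equiv.permCongr_apply, h]

lemma glue_mul (f : α ↪ β) (σ σ' : Perm α) (τ τ' : Perm ↥(Set.range ⇑f)ᶜ) :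
    glue f σ τ * glue f σ' τ' = glue f (σ * σ') (τ * τ') := by
  ext x
  simp [glue, Equiv.Perm.mul_apply, ← Equiv.Perm.sumCongr_mul]

lemma glue_one (f : α ↪ β) : glue f 1 1 = 1 := by
  ext x
  simp [glue, Equiv.Perm.sumCongr_one]

lemma glue_eq_of (f : α ↪ β) (σ : Perm α) (τ : Perm ↥(Set.range ⇑f)ᶜ) (P : Perm β)
    (h1 : ∀ a, P (f a) = f (σ a)) (h2 : ∀ b : ↥(Set.range ⇑f)ᶜ, P ↑b = ↑(τ b)) :
    glue f σ τ = P := by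
  ext x
  obtain y := (sumEquiv f).symm x
  have hx : x = sumEquiv f ((sumEquiv f).symm x) := by simp
  rw [hx]
  rcases (sumEquiv f).symm x with a | b
  · simp [h1]
  · simp [h2]

lemma glue_left_injective (f : α ↪ β) {σ σ' : Perm α} {τ τ' : Perm ↥(Set.range ⇑f)ᶜ}
    (h : glue f σ τ = glue f σ' τ') : σ = σ' ∧ τ = τ' := by
  constructor
  · ext a
    have := congrArg (fun P : Perm β => P (f a)) h
    simpa using f.injective (by simpa using this)
  · ext b
    have := congrArg (fun P : Perm β => P ↑b) h
    simp only [glue_apply_inr] at this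
    exact this

/-- Number of fixed points of a permutation of an arbitrary type. -/
noncomputable def fixc {γ : Type*} (σ : Perm γ) : ℕ := Nat.card {x : γ // σ x = x}

lemma fixc_permCongr {γ δ : Type*} (e : γ ≃ δ) (p : Perm γ) :
    fixc (e.permCongr p) = fixc p := by
  refine (Nat.card_congr ?_).symm
  refine Equiv.subtypeEquiv e (fun a => ?_)
  simp [Equiv.permCongr_apply]

lemma fixc_sumCongr {γ δ : Type*} [Finite γ] [Finite δ] (σ : Perm γ) (τ : Perm δ) :
    fixc (σ.sumCongr τ) = fixc σ + fixc τ := by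
  rw [fixc, Nat.card_congr (Equiv.subtypeSum (p := fun y => σ.sumCongr τ y = y)), Nat.card_sum]
  congr 1
  · exact Nat.card_congr (Equiv.subtypeEquivRight (fun a => by simp))
  · exact Nat.card_congr (Equiv.subtypeEquivRight (fun b => by simp))

lemma fixc_glue (f : α ↪ β) (σ : Perm α) (τ : Perm ↥(Set.range ⇑f)ᶜ) :
    fixc (glue f σ τ) = fixc σ + fixc τ := by
  rw [glue, fixc_permCongr, fixc_sumCongr]

lemma fixc_one {γ : Type*} : fixc (1 : Perm γ) = Nat.card γ := by
  exact Nat.card_congr (Equiv.subtypeUnivEquiv (fun _ => by simp))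

lemma fixc_le {γ : Type*} [Fintype γ] (σ : Perm γ) : fixc σ ≤ Fintype.card γ := by
  rw [fixc, Nat.card_eq_fintype_card]
  exact Fintype.card_subtype_le _

/-- Restrict a permutation to the complement of the range of `f`, given that on the
range it acts as `f ∘ σ ∘ f⁻¹`. -/
noncomputable def restrictCompl (f : α ↪ β) (P : Perm β) (σ : Perm α)
    (h : ∀ a, P (f a) = f (σ a)) : Perm ↥(Set.range ⇑f)ᶜ := by
  refine P.subtypePerm (fun x => ?_)
  simp only [Set.mem_compl_iff, Set.mem_range]
  constructor
  · rintro hx ⟨a, ha⟩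
    exact hx ⟨σ a, by rw [← h, ha]⟩
  · rintro hx ⟨a, ha⟩
    have : P (f (σ.symm a)) = f a := by rw [h]; simp
    exact hx ⟨σ.symm a, P.injective (by rw [this, ha])⟩

lemma restrictCompl_spec (f : α ↪ β) (P : Perm β) (σ : Perm α)
    (h : ∀ a, P (f a) = f (σ a)) :
    glue f σ (restrictCompl f P σ h) = P := by
  exact glue_eq_of f _ _ P h (fun b => by
    simp [restrictCompl, Equiv.Perm.subtypePerm_apply])

end Glue

section OrbFacts

lemma conjpow {Γ : Type*} [Group Γ] (a b : Γ) (n : ℕ) :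
    (a * b * a⁻¹) ^ n = a * b ^ n * a⁻¹ := by
  induction n with
  | zero => simp
  | succ n ih => rw [pow_succ, pow_succ, ih]; group

variable {N : ℕ} (L G : Equiv.Perm (Fin N))

lemma mem_orb_self (x : Fin N) : x ∈ orb L x := ⟨0, by simp⟩

lemma orb_apply_mem {x y : Fin N} (hy : y ∈ orb L x) (n : ℕ) : (L ^ n) y ∈ orb L x := by
  obtain ⟨m, rfl⟩ := hy
  exact ⟨n + m, by rw [pow_add]; rfl⟩

lemma mem_orb_symm {x y : Fin N} (hy : y ∈ orb L x) : x ∈ orb L y := by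
  obtain ⟨m, rfl⟩ := hy
  refine ⟨m * (orderOf L - 1), ?_⟩
  have h1 : (L ^ (m * (orderOf L - 1))) ((L ^ m) x) = (L ^ (m * (orderOf L - 1) + m)) x := by
    rw [pow_add]; rfl
  have ho : 1 ≤ orderOf L := orderOf_pos L
  have h2 : m * (orderOf L - 1) + m = orderOf L * m := by
    cases' Nat.exists_eq_add_of_le ho with k hk
    rw [hk, Nat.add_sub_cancel_left]; ring
  rw [h1, h2, pow_mul, pow_orderOf_eq_one, one_pow, Equiv.Perm.one_apply]

lemma orb_eq_of_mem {x y : Fin N} (hy : y ∈ orb L x) : orb L y = orb L x := by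
  ext z
  constructor
  · rintro ⟨n, rfl⟩; exact orb_apply_mem L hy n
  · rintro ⟨n, rfl⟩; exact orb_apply_mem L (mem_orb_symm L hy) n

lemma orb_disjoint {x y : Fin N} (hne : orb L x ≠ orb L y) : Disjoint (orb L x) (orb L y) := by
  rw [Set.disjoint_left]
  intro z hzx hzy
  exact hne ((orb_eq_of_mem L hzx).symm.trans (orb_eq_of_mem L hzy))

/-- If `G` conjugates `L` to `L⁻¹`, the `G`-image of an orbit of `L` is an orbit of `L`. -/
lemma image_orb (hG : G * G = 1) (hconj : G * L * G = L⁻¹) (x : Fin N) :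
    ⇑G '' orb L x = orb L (G x) := by
  have hGinv : G⁻¹ = G := inv_eq_iff_mul_eq_one.2 hG
  have hGG : ∀ z, G (G z) = z := fun z => by
    have : (G * G) z = (1 : Equiv.Perm (Fin N)) z := by rw [hG]
    simpa [Equiv.Perm.mul_apply] using this
  have key : ∀ (n : ℕ) (y : Fin N), G ((L ^ n) y) = (L⁻¹ ^ n) (G y) := by
    intro n y
    have h1 : L⁻¹ ^ n = G * L ^ n * G := by
      rw [← hconj]; nth_rewrite 2 [← hGinv]; rw [conjpow, hGinv]
    rw [h1]
    simp [Equiv.Perm.mul_apply, hGG]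
  have hLinv : L⁻¹ = L ^ (orderOf L - 1) := by
    rw [inv_eq_iff_mul_eq_one, ← pow_succ', Nat.sub_add_cancel (orderOf_pos L),
      pow_orderOf_eq_one]
  have hinvpow : ∀ (n : ℕ) (y : Fin N), (L⁻¹ ^ n) y ∈ orb L y := fun n y => by
    rw [hLinv, ← pow_mul]; exact ⟨_, rfl⟩
  ext z
  constructor
  · rintro ⟨w, ⟨n, rfl⟩, rfl⟩
    rw [key]
    exact hinvpow n (G x)
  · rintro ⟨n, rfl⟩
    refine ⟨G ((L ^ n) (G x)), ?_, hGG _⟩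
    rw [key n (G x), hGG]
    exact hinvpow n x

end OrbFacts

section MinPeriod

variable {N : ℕ} (L : Equiv.Perm (Fin N))

lemma perm_mem_periodicPts (x : Fin N) : x ∈ periodicPts ⇑L := by
  refine ⟨orderOf L, orderOf_pos L, ?_⟩
  show (⇑L)^[orderOf L] x = x
  rw [Equiv.Perm.iterate_eq_pow, pow_orderOf_eq_one]
  rfl

lemma minPeriod_pos (x : Fin N) : 0 < Function.minimalPeriod ⇑L x :=
  Function.minimalPeriod_pos_of_mem_periodicPts (perm_mem_periodicPts L x)

lemma pow_minPeriod_apply (x : Fin N) : (L ^ Function.minimalPeriod ⇑L x) x = x := by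
  have := Function.iterate_minimalPeriod (f := ⇑L) (x := x)
  rwa [Equiv.Perm.iterate_eq_pow] at this

lemma pow_mod_minPeriod (x : Fin N) (n : ℕ) :
    (L ^ (n % Function.minimalPeriod ⇑L x)) x = (L ^ n) x := by
  have := Function.iterate_mod_minimalPeriod_eq (f := ⇑L) (x := x) (n := n)
  rwa [Equiv.Perm.iterate_eq_pow, Equiv.Perm.iterate_eq_pow] at this

lemma pow_injOn (x : Fin N) {a b : ℕ} (ha : a < Function.minimalPeriod ⇑L x)
    (hb : b < Function.minimalPeriod ⇑L x) (hab : (L ^ a) x = (L ^ b) x) : a = b := by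
  refine Function.iterate_injOn_Iio_minimalPeriod (f := ⇑L) (x := x) ha hb ?_
  simpa [Equiv.Perm.iterate_eq_pow] using hab

lemma orb_card_eq_minPeriod (x : Fin N) :
    Nat.card (orb L x) = Function.minimalPeriod ⇑L x := by
  set p := Function.minimalPeriod ⇑L x with hp'
  have hp : 0 < p := minPeriod_pos L x
  have horb : orb L x = ↑((Finset.range p).image (fun n => (L ^ n) x)) := by
    ext z
    simp only [orb, Set.mem_setOf_eq, Finset.coe_image, Finset.coe_range, Set.mem_image,
      Set.mem_Iio]
    constructor
    · rintro ⟨n, rfl⟩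
      exact ⟨n % p, Nat.mod_lt _ hp, pow_mod_minPeriod L x n⟩
    · rintro ⟨n, _, rfl⟩
      exact ⟨n, rfl⟩
  rw [horb, Nat.card_coe_set_eq, Set.ncard_coe_finset,
    Finset.card_image_of_injOn, Finset.card_range]
  intro a ha b hb hab
  simp only [Finset.coe_range, Set.mem_Iio] at ha hb
  exact pow_injOn L x ha hb hab

end MinPeriod

section Pairing

variable (t : ℕ)

/-- The pairing `(j, b) ↦ (j, ¬b)`. -/
def gPerm : Equiv.Perm (Fin t × Bool) :=
  Function.Involutive.toPerm (fun a => (a.1, !a.2)) (fun a => by simp)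

/-- The pairing `(j, true) ↦ (j+1, false)`, `(j, false) ↦ (j-1, true)`. -/
def hPerm : Equiv.Perm (Fin t × Bool) :=
  Function.Involutive.toPerm
    (fun a => if a.2 then (finRotate t a.1, false) else ((finRotate t).symm a.1, true))
    (fun a => by rcases a with ⟨j, b⟩; cases b <;> simp [-finRotate_symm_apply, -finRotate_apply])

@[simp] lemma gPerm_apply (a : Fin t × Bool) : gPerm t a = (a.1, !a.2) := rfl

lemma hPerm_apply_true (j : Fin t) : hPerm t (j, true) = (finRotate t j, false) := rfl

lemma hPerm_apply_false (j : Fin t) : hPerm t (j, false) = ((finRotate t).symm j, true) := rfl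

lemma gPerm_sq : gPerm t * gPerm t = 1 := by
  apply Equiv.ext
  intro a
  simp [Equiv.Perm.mul_apply]

lemma hPerm_sq : hPerm t * hPerm t = 1 := by
  apply Equiv.ext
  rintro ⟨j, b⟩
  cases b <;> simp [Equiv.Perm.mul_apply, hPerm_apply_true, hPerm_apply_false, -finRotate_symm_apply, -finRotate_apply]

lemma gPerm_snd (a : Fin t × Bool) : (gPerm t a).2 = !a.2 := rfl

lemma hPerm_snd (a : Fin t × Bool) : (hPerm t a).2 = !a.2 := by
  rcases a with ⟨j, b⟩; cases b <;> rfl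

lemma fixc_gPerm : fixc (gPerm t) = 0 := by
  have : IsEmpty {a : Fin t × Bool // gPerm t a = a} := by
    refine ⟨fun ⟨a, ha⟩ => ?_⟩
    have := congrArg Prod.snd ha
    rw [gPerm_snd] at this
    simp at this
  simp only [fixc]; exact Nat.card_of_isEmpty

lemma fixc_hPerm : fixc (hPerm t) = 0 := by
  have : IsEmpty {a : Fin t × Bool // hPerm t a = a} := by
    refine ⟨fun ⟨a, ha⟩ => ?_⟩
    have := congrArg Prod.snd ha
    rw [hPerm_snd] at this
    simp at this
  simp [fixc, Nat.card_of_isEmpty]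

lemma rot_pow_zero (ht : 0 < t) : ∀ k (hk : k < t),
    ((finRotate t) ^ k) ⟨0, ht⟩ = ⟨k, hk⟩ := by
  intro k
  induction k with
  | zero => intro hk; simp
  | succ k ih =>
    intro hk
    rw [pow_succ', Equiv.Perm.mul_apply, ih (by omega)]
    rcases t with _ | t'
    · omega
    · rw [finRotate_succ_apply]
      ext
      rw [Fin.val_add_one]
      have : (⟨k, by omega⟩ : Fin (t' + 1)) ≠ Fin.last t' := by
        intro hc
        have := congrArg Fin.val hc
        simp at this
        omega
      simp [this]

end Pairing

section PermCongrHelpers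

lemma permCongr_mul {γ δ : Type*} (e : γ ≃ δ) (p q : Equiv.Perm γ) :
    e.permCongr (p * q) = e.permCongr p * e.permCongr q := by
  ext x
  simp [Equiv.permCongr_apply, Equiv.Perm.mul_apply]

lemma permCongr_one' {γ δ : Type*} (e : γ ≃ δ) : e.permCongr 1 = 1 := by
  ext x
  simp [Equiv.permCongr_apply]

lemma glue_pow {α β : Type*} [Fintype α] [Fintype β] (f : α ↪ β) (σ : Equiv.Perm α)
    (τ : Equiv.Perm ↥(Set.range ⇑f)ᶜ) (n : ℕ) :
    (glue f σ τ) ^ n = glue f (σ ^ n) (τ ^ n) := by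
  induction n with
  | zero => rw [pow_zero, pow_zero, pow_zero, glue_one]
  | succ n ih => rw [pow_succ, pow_succ, pow_succ, ih, glue_mul]

lemma fixCard_eq_fixc {M : ℕ} (σ : Equiv.Perm (Fin M)) : fixCard σ = fixc σ := rfl

end PermCongrHelpers

section MainBij

variable {N t : ℕ}

/-- A chosen equivalence between the complement of the range of an embedding
`Fin t × Bool ↪ Fin N` and `Fin (N - 2 * t)`. -/
noncomputable def eC (f : (Fin t × Bool) ↪ Fin N) : ↥(Set.range ⇑f)ᶜ ≃ Fin (N - 2 * t) := by
  apply Fintype.equivFinOfCardEq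
  rw [Fintype.card_compl_set, Set.card_range_of_injective f.injective, Fintype.card_fin]
  congr 1
  simp [Fintype.card_prod]
  ring

noncomputable def downE (f : (Fin t × Bool) ↪ Fin N) :
    Equiv.Perm ↥(Set.range ⇑f)ᶜ ≃ Equiv.Perm (Fin (N - 2 * t)) := (eC f).permCongr

lemma rho_pow (n : ℕ) (j : Fin t) :
    ((hPerm t * gPerm t) ^ n) (j, false) = (((finRotate t) ^ n) j, false) := by
  induction n with
  | zero => simp
  | succ n ih =>
    rw [pow_succ', Equiv.Perm.mul_apply, ih, pow_succ', Equiv.Perm.mul_apply]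
    rw [Equiv.Perm.mul_apply]
    simp [hPerm_apply_true]

variable (f : (Fin t × Bool) ↪ Fin N) (τG τH : Equiv.Perm ↥(Set.range ⇑f)ᶜ)

lemma glued_pow_apply (n : ℕ) (a : Fin t × Bool) :
    ((glue f (hPerm t) τH * glue f (gPerm t) τG) ^ n) (f a) =
      f (((hPerm t * gPerm t) ^ n) a) := by
  rw [glue_mul, glue_pow, glue_apply_inl]

lemma glued_orb_eq (ht : 0 < t) :
    orb (glue f (hPerm t) τH * glue f (gPerm t) τG) (f (⟨0, ht⟩, false)) =
      Set.range (fun j : Fin t => f (j, false)) := by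
  ext z
  constructor
  · rintro ⟨n, rfl⟩
    rw [glued_pow_apply, rho_pow]
    exact ⟨_, rfl⟩
  · rintro ⟨j, rfl⟩
    exact ⟨j.val, by rw [glued_pow_apply, rho_pow, rot_pow_zero t ht j.val j.isLt]⟩

lemma glued_orb_card (ht : 0 < t) :
    Nat.card (orb (glue f (hPerm t) τH * glue f (gPerm t) τG) (f (⟨0, ht⟩, false))) = t := by
  rw [glued_orb_eq f τG τH ht]
  have hinj : Function.Injective (fun j : Fin t => f (j, false)) := by
    intro a b hab
    have := f.injective hab
    simpa using this
  rw [Nat.card_range_of_injective hinj, Nat.card_eq_fintype_card, Fintype.card_fin]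

lemma glued_image_orb (ht : 0 < t) :
    ⇑(glue f (gPerm t) τG) ''
        orb (glue f (hPerm t) τH * glue f (gPerm t) τG) (f (⟨0, ht⟩, false)) =
      Set.range (fun j : Fin t => f (j, true)) := by
  rw [glued_orb_eq f τG τH ht, ← Set.range_comp]
  exact congrArg Set.range (funext fun j => by simp [Function.comp])

lemma glued_asym (ht : 0 < t) :
    ⇑(glue f (gPerm t) τG) ''
        orb (glue f (hPerm t) τH * glue f (gPerm t) τG) (f (⟨0, ht⟩, false)) ≠
      orb (glue f (hPerm t) τH * glue f (gPerm t) τG) (f (⟨0, ht⟩, false)) := by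
  rw [glued_image_orb f τG τH ht, glued_orb_eq f τG τH ht]
  intro heq
  have hm : f (⟨0, ht⟩, true) ∈ Set.range (fun j : Fin t => f (j, true)) := ⟨_, rfl⟩
  rw [heq] at hm
  obtain ⟨j, hj⟩ := hm
  have := f.injective hj
  simp at this

lemma glue_invol_fix (σ : Equiv.Perm (Fin t × Bool)) (hσ : σ * σ = 1) (hfixσ : fixc σ = 0)
    (G' : Equiv.Perm (Fin (N - 2 * t))) (hG' : G' * G' = 1) :
    glue f σ ((downE f).symm G') * glue f σ ((downE f).symm G') = 1 ∧
      fixCard (glue f σ ((downE f).symm G')) = fixCard G' := by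
  constructor
  · rw [glue_mul, hσ]
    have h1 : (downE f).symm G' * (downE f).symm G' = (downE f).symm (G' * G') := by
      show (eC f).permCongr.symm G' * (eC f).permCongr.symm G' = _
      rw [Equiv.permCongr_symm, ← _root_.permCongr_mul]
      rfl
    rw [h1, hG']
    have h2 : (downE f).symm 1 = 1 := by
      show (eC f).permCongr.symm 1 = 1
      rw [Equiv.permCongr_symm, permCongr_one']
    rw [h2, glue_one]
  · rw [fixCard_eq_fixc, fixc_glue, hfixσ, zero_add, fixCard_eq_fixc]
    show fixc ((eC f).permCongr.symm G') = fixc G'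
    rw [Equiv.permCongr_symm, fixc_permCongr]

end MainBij

lemma rot_val {t : ℕ} (j : Fin t) : (finRotate t j).val = (j.val + 1) % t := by
  rcases t with _ | t'
  · exact j.elim0
  · rw [finRotate_succ_apply, Fin.val_add_one]
    by_cases hj : j = Fin.last t'
    · subst hj
      simp [Fin.val_last, Nat.mod_self]
    · have hlt : j.val < t' := by
        have h1 := j.isLt
        have h2 : j.val ≠ t' := fun hc => hj (Fin.ext (by simpa [Fin.val_last] using hc))
        omega
      rw [if_neg hj, Nat.mod_eq_of_lt (by omega)]

section Psi

variable {N t g h : ℕ}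

/-- The forward map of the main bijection. -/
noncomputable def psiMap (ht : 0 < t) (g h : ℕ)
    (p : ((Fin t × Bool) ↪ Fin N) × ↥(pairE g h (N - 2 * t))) :
    {q : (Equiv.Perm (Fin N) × Equiv.Perm (Fin N)) × Fin N //
      q.1 ∈ pairE g h N ∧
        (⇑q.1.1 '' orb (q.1.2 * q.1.1) q.2 ≠ orb (q.1.2 * q.1.1) q.2 ∧
          Nat.card (orb (q.1.2 * q.1.1) q.2) = t)} :=
  ⟨((glue p.1 (gPerm t) ((downE p.1).symm p.2.1.1),
      glue p.1 (hPerm t) ((downE p.1).symm p.2.1.2)), p.1 (⟨0, ht⟩, false)), by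
    obtain ⟨hG'2, hH'2, hfixG', hfixH'⟩ := p.2.2
    refine ⟨?_, glued_asym p.1 _ _ ht, glued_orb_card p.1 _ _ ht⟩
    obtain ⟨hg1, hg2⟩ := glue_invol_fix p.1 (gPerm t) (gPerm_sq t) (fixc_gPerm t) _ hG'2
    obtain ⟨hh1, hh2⟩ := glue_invol_fix p.1 (hPerm t) (hPerm_sq t) (fixc_hPerm t) _ hH'2
    exact ⟨hg1, hh1, hg2.trans hfixG', hh2.trans hfixH'⟩⟩

lemma psiMap_injective (ht : 0 < t) : Function.Injective (psiMap (N := N) ht g h) := by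
  rintro ⟨f₁, ⟨⟨G₁, H₁⟩, hp₁⟩⟩ ⟨f₂, ⟨⟨G₂, H₂⟩, hp₂⟩⟩ heq
  have hval := congrArg Subtype.val heq
  simp only [psiMap] at hval
  have hG : glue f₁ (gPerm t) ((downE f₁).symm G₁) = glue f₂ (gPerm t) ((downE f₂).symm G₂) :=
    congrArg (fun q => q.1.1) hval
  have hH : glue f₁ (hPerm t) ((downE f₁).symm H₁) = glue f₂ (hPerm t) ((downE f₂).symm H₂) :=
    congrArg (fun q => q.1.2) hval
  have hx : f₁ (⟨0, ht⟩, false) = f₂ (⟨0, ht⟩, false) := congrArg (fun q => q.2) hval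
  -- the embeddings agree
  have hff : ∀ j : Fin t, f₁ (j, false) = f₂ (j, false) := by
    intro j
    have e₁ := glued_pow_apply f₁ ((downE f₁).symm G₁) ((downE f₁).symm H₁) j.val (⟨0, ht⟩, false)
    have e₂ := glued_pow_apply f₂ ((downE f₂).symm G₂) ((downE f₂).symm H₂) j.val (⟨0, ht⟩, false)
    rw [rho_pow, rot_pow_zero t ht j.val j.isLt] at e₁ e₂
    rw [← e₁, ← e₂, hG, hH, hx]
  have hft : ∀ j : Fin t, f₁ (j, true) = f₂ (j, true) := by
    intro j
    have e₁ : glue f₁ (gPerm t) ((downE f₁).symm G₁) (f₁ (j, false)) = f₁ (j, true) := by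
      rw [glue_apply_inl]; rfl
    have e₂ : glue f₂ (gPerm t) ((downE f₂).symm G₂) (f₂ (j, false)) = f₂ (j, true) := by
      rw [glue_apply_inl]; rfl
    rw [← e₁, ← e₂, hG, hff j]
  have hf : f₁ = f₂ := by
    apply DFunLike.ext
    rintro ⟨j, b⟩
    cases b
    · exact hff j
    · exact hft j
  subst hf
  have hG' : G₁ = G₂ := by
    have := (glue_left_injective f₁ hG).2
    exact (downE f₁).symm.injective this
  have hH' : H₁ = H₂ := by
    have := (glue_left_injective f₁ hH).2
    exact (downE f₁).symm.injective this
  subst hG'; subst hH'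
  rfl

end Psi

section PsiSurj

variable {N t g h : ℕ}

lemma psiMap_surjective (ht : 0 < t) : Function.Surjective (psiMap (N := N) ht g h) := by
  rintro ⟨⟨⟨G, H⟩, x⟩, ⟨hG2, hH2, hfixG, hfixH⟩, hasym, hcard⟩
  replace hG2 : G * G = 1 := hG2
  replace hH2 : H * H = 1 := hH2
  replace hfixG : fixCard G = g := hfixG
  replace hfixH : fixCard H = h := hfixH
  replace hasym : ⇑G '' orb (H * G) x ≠ orb (H * G) x := hasym
  replace hcard : Nat.card (orb (H * G) x) = t := hcard
  set L := H * G with hL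
  have hGinv : G⁻¹ = G := inv_eq_iff_mul_eq_one.2 hG2
  have hHinv : H⁻¹ = H := inv_eq_iff_mul_eq_one.2 hH2
  have hGG : ∀ z, G (G z) = z := fun z => by
    have : (G * G) z = (1 : Equiv.Perm (Fin N)) z := by rw [hG2]
    simpa [Equiv.Perm.mul_apply] using this
  have hHH : ∀ z, H (H z) = z := fun z => by
    have : (H * H) z = (1 : Equiv.Perm (Fin N)) z := by rw [hH2]
    simpa [Equiv.Perm.mul_apply] using this
  have hconj : G * L * G = L⁻¹ := by
    rw [hL, mul_inv_rev, hGinv, hHinv]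
    have e1 : G * (H * G) * G = (G * H) * (G * G) := by group
    rw [e1, hG2, mul_one]
  -- minimal period is t
  have hpt : Function.minimalPeriod ⇑L x = t := by
    rw [← orb_card_eq_minPeriod]; exact hcard
  have hLt : (L ^ t) x = x := by
    rw [← hpt]; exact pow_minPeriod_apply L x
  have hmod : ∀ n : ℕ, (L ^ (n % t)) x = (L ^ n) x := by
    intro n
    have := pow_mod_minPeriod L x n
    rwa [hpt] at this
  have hinj : ∀ a b : ℕ, a < t → b < t → (L ^ a) x = (L ^ b) x → a = b := by
    intro a b ha hb hab
    exact pow_injOn L x (hpt ▸ ha) (hpt ▸ hb) hab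
  -- disjointness of the two orbits
  have himg : ⇑G '' orb L x = orb L (G x) := image_orb L G hG2 hconj x
  have hneq : orb L x ≠ orb L (G x) := fun he => hasym (himg.trans he.symm)
  have hdisj : Disjoint (orb L x) (orb L (G x)) := orb_disjoint L hneq
  -- the embedding
  set F : Fin t × Bool → Fin N :=
    fun a => if a.2 = true then G ((L ^ a.1.val) x) else (L ^ a.1.val) x with hF
  have hmemC : ∀ j : Fin t, (L ^ j.val) x ∈ orb L x := fun j => ⟨j.val, rfl⟩
  have hmemD : ∀ j : Fin t, G ((L ^ j.val) x) ∈ orb L (G x) := by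
    intro j
    rw [← himg]
    exact ⟨(L ^ j.val) x, hmemC j, rfl⟩
  have hFinj : Function.Injective F := by
    rintro ⟨j₁, b₁⟩ ⟨j₂, b₂⟩ hab
    cases b₁ <;> cases b₂
    · have hab' : (L ^ j₁.val) x = (L ^ j₂.val) x := by simpa [hF] using hab
      exact Prod.ext (Fin.ext (hinj _ _ j₁.isLt j₂.isLt hab')) rfl
    · exfalso
      have hab' : (L ^ j₁.val) x = G ((L ^ j₂.val) x) := by simpa [hF] using hab
      have h1 : G ((L ^ j₂.val) x) ∈ orb L x := by rw [← hab']; exact hmemC j₁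
      exact Set.disjoint_left.1 hdisj h1 (hmemD j₂)
    · exfalso
      have hab' : G ((L ^ j₁.val) x) = (L ^ j₂.val) x := by simpa [hF] using hab
      have h1 : G ((L ^ j₁.val) x) ∈ orb L x := by rw [hab']; exact hmemC j₂
      exact Set.disjoint_left.1 hdisj h1 (hmemD j₁)
    · have hab' : G ((L ^ j₁.val) x) = G ((L ^ j₂.val) x) := by simpa [hF] using hab
      exact Prod.ext (Fin.ext (hinj _ _ j₁.isLt j₂.isLt (G.injective hab'))) rfl
  set FEmb : (Fin t × Bool) ↪ Fin N := ⟨F, hFinj⟩ with hFEmb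
  -- compatibility on the range
  have hGF : ∀ a : Fin t × Bool, G (FEmb a) = FEmb (gPerm t a) := by
    rintro ⟨j, b⟩
    cases b
    · rfl
    · show G (G ((L ^ j.val) x)) = (L ^ j.val) x
      exact hGG _
  have hLstep : ∀ k : ℕ, (L ^ (k + 1)) x = H (G ((L ^ k) x)) := by
    intro k
    rw [pow_succ']
    rfl
  have hHF : ∀ a : Fin t × Bool, H (FEmb a) = FEmb (hPerm t a) := by
    rintro ⟨j, b⟩
    cases b
    · -- a = (j, false) : H ((L ^ j) x) = G ((L ^ k) x) with k = (rot.symm j).val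
      show H ((L ^ j.val) x) = G ((L ^ ((finRotate t).symm j).val) x)
      set k := ((finRotate t).symm j).val with hk
      have hrot : (finRotate t) ((finRotate t).symm j) = j := by simp [-finRotate_symm_apply, -finRotate_apply]
      have hjval : j.val = (k + 1) % t := by
        rw [← rot_val ((finRotate t).symm j), hrot]
      have h1 : (L ^ j.val) x = (L ^ (k + 1)) x := by
        rw [hjval, hmod]
      rw [h1, hLstep, hHH]
    · -- a = (j, true) : H (G ((L^j) x)) = (L ^ (rot j).val) x
      show H (G ((L ^ j.val) x)) = (L ^ (finRotate t j).val) x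
      rw [← hLstep, rot_val, hmod]
  set τG := restrictCompl FEmb G (gPerm t) hGF with hτG
  set τH := restrictCompl FEmb H (hPerm t) hHF with hτH
  have hGglue : glue FEmb (gPerm t) τG = G := restrictCompl_spec FEmb G (gPerm t) hGF
  have hHglue : glue FEmb (hPerm t) τH = H := restrictCompl_spec FEmb H (hPerm t) hHF
  -- involution properties of the restrictions
  have hτG2 : τG * τG = 1 := by
    have h1 : glue FEmb (gPerm t * gPerm t) (τG * τG) = glue FEmb 1 1 := by
      rw [← glue_mul, hGglue, hG2, glue_one]
    rw [gPerm_sq] at h1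
    exact (glue_left_injective FEmb h1).2
  have hτH2 : τH * τH = 1 := by
    have h1 : glue FEmb (hPerm t * hPerm t) (τH * τH) = glue FEmb 1 1 := by
      rw [← glue_mul, hHglue, hH2, glue_one]
    rw [hPerm_sq] at h1
    exact (glue_left_injective FEmb h1).2
  have hfixτG : fixc τG = g := by
    have h1 : fixCard G = fixc (gPerm t) + fixc τG := by
      rw [← hGglue, fixCard_eq_fixc, fixc_glue]
    rw [hfixG, fixc_gPerm, zero_add] at h1
    exact h1.symm
  have hfixτH : fixc τH = h := by
    have h1 : fixCard H = fixc (hPerm t) + fixc τH := by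
      rw [← hHglue, fixCard_eq_fixc, fixc_glue]
    rw [hfixH, fixc_hPerm, zero_add] at h1
    exact h1.symm
  -- transported permutations
  set G' := downE FEmb τG with hG'
  set H' := downE FEmb τH with hH'
  have hdownG : (downE FEmb).symm G' = τG := by rw [hG', Equiv.symm_apply_apply]
  have hdownH : (downE FEmb).symm H' = τH := by rw [hH', Equiv.symm_apply_apply]
  have hmemE : (G', H') ∈ pairE g h (N - 2 * t) := by
    refine ⟨?_, ?_, ?_, ?_⟩
    · show downE FEmb τG * downE FEmb τG = 1
      show (eC FEmb).permCongr τG * (eC FEmb).permCongr τG = 1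
      rw [← _root_.permCongr_mul, hτG2, permCongr_one']
    · show (eC FEmb).permCongr τH * (eC FEmb).permCongr τH = 1
      rw [← _root_.permCongr_mul, hτH2, permCongr_one']
    · show fixCard ((eC FEmb).permCongr τG) = g
      rw [fixCard_eq_fixc, fixc_permCongr, hfixτG]
    · show fixCard ((eC FEmb).permCongr τH) = h
      rw [fixCard_eq_fixc, fixc_permCongr, hfixτH]
  refine ⟨⟨FEmb, ⟨(G', H'), hmemE⟩⟩, ?_⟩
  apply Subtype.ext
  show ((glue FEmb (gPerm t) ((downE FEmb).symm G'),
      glue FEmb (hPerm t) ((downE FEmb).symm H')), FEmb (⟨0, ht⟩, false)) = ((G, H), x)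
  rw [hdownG, hdownH, hGglue, hHglue]
  have hx0 : FEmb (⟨0, ht⟩, false) = x := by
    show F (⟨0, ht⟩, false) = x
    simp [hF]
  rw [hx0]

end PsiSurj

section Counting

variable (N t g h : ℕ)

/-- The key counting identity coming from the main bijection. -/
lemma sum_asymCount (ht : 0 < t) :
    ∑ p ∈ (pairE g h N).toFinset, asymCount N t p.1 p.2 =
      N.descFactorial (2 * t) * Nat.card (pairE g h (N - 2 * t)) := by
  -- identify the left side with the cardinality of the total space
  have hcardS : Nat.card
      {q : (Equiv.Perm (Fin N) × Equiv.Perm (Fin N)) × Fin N //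
        q.1 ∈ pairE g h N ∧
          (⇑q.1.1 '' orb (q.1.2 * q.1.1) q.2 ≠ orb (q.1.2 * q.1.1) q.2 ∧
            Nat.card (orb (q.1.2 * q.1.1) q.2) = t)} =
      ∑ p ∈ (pairE g h N).toFinset, asymCount N t p.1 p.2 := by
    have e : {q : (Equiv.Perm (Fin N) × Equiv.Perm (Fin N)) × Fin N //
        q.1 ∈ pairE g h N ∧
          (⇑q.1.1 '' orb (q.1.2 * q.1.1) q.2 ≠ orb (q.1.2 * q.1.1) q.2 ∧
            Nat.card (orb (q.1.2 * q.1.1) q.2) = t)} ≃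
        Σ p : ↥((pairE g h N).toFinset),
          {x : Fin N // ⇑(p : (Equiv.Perm (Fin N) × Equiv.Perm (Fin N))).1 ''
              orb ((p : (Equiv.Perm (Fin N) × Equiv.Perm (Fin N))).2 *
                (p : (Equiv.Perm (Fin N) × Equiv.Perm (Fin N))).1) x ≠
              orb ((p : (Equiv.Perm (Fin N) × Equiv.Perm (Fin N))).2 *
                (p : (Equiv.Perm (Fin N) × Equiv.Perm (Fin N))).1) x ∧
            Nat.card (orb ((p : (Equiv.Perm (Fin N) × Equiv.Perm (Fin N))).2 *
              (p : (Equiv.Perm (Fin N) × Equiv.Perm (Fin N))).1) x) = t} :=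
      { toFun := fun q => ⟨⟨q.1.1, Set.mem_toFinset.2 q.2.1⟩, ⟨q.1.2, q.2.2⟩⟩
        invFun := fun s => ⟨(s.1.1, s.2.1), Set.mem_toFinset.1 s.1.2, s.2.2⟩
        left_inv := fun q => rfl
        right_inv := fun s => rfl }
    rw [Nat.card_congr e, Nat.card_eq_fintype_card, Fintype.card_sigma]
    rw [← Finset.sum_coe_sort ((pairE g h N).toFinset) (fun p => asymCount N t p.1 p.2)]
    apply Finset.sum_congr rfl
    intro p _
    rw [asymCount, ← Nat.card_eq_fintype_card]
    rfl
  rw [← hcardS,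
    ← Nat.card_eq_of_bijective (psiMap (N := N) ht g h)
      ⟨psiMap_injective ht, psiMap_surjective ht⟩]
  rw [Nat.card_prod, Nat.card_eq_fintype_card (α := (Fin t × Bool) ↪ Fin N),
    Fintype.card_embedding_eq]
  congr 2
  · rw [Fintype.card_fin]
  · simp [Fintype.card_prod]
    ring

end Counting

section InvolutionCount

/-- The set of involutions of `Fin M` with exactly `g` fixed points. -/
def InvSet (g M : ℕ) : Set (Equiv.Perm (Fin M)) := {G | G * G = 1 ∧ fixCard G = g}

lemma pairE_card_eq (g h M : ℕ) :
    Nat.card (pairE g h M) = Nat.card (InvSet g M) * Nat.card (InvSet h M) := by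
  have hset : pairE g h M = (InvSet g M) ×ˢ (InvSet h M) := by
    ext p
    simp [pairE, InvSet, Set.mem_prod]
    tauto
  rw [hset, Nat.card_congr (Equiv.Set.prod _ _), Nat.card_prod]

/-- The swap on `Bool`. -/
def bPerm : Equiv.Perm Bool := Function.Involutive.toPerm not (fun b => by simp)

@[simp] lemma bPerm_apply (b : Bool) : bPerm b = !b := rfl

lemma bPerm_sq : bPerm * bPerm = 1 := by
  apply Equiv.ext; intro b; simp [Equiv.Perm.mul_apply]

lemma fixc_bPerm : fixc bPerm = 0 := by
  have : IsEmpty {b : Bool // bPerm b = b} := by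
    refine ⟨fun ⟨b, hb⟩ => ?_⟩
    simp at hb
  simp [fixc, Nat.card_of_isEmpty]

variable {M : ℕ}

noncomputable def eC2 (f : Bool ↪ Fin (M + 2)) : ↥(Set.range ⇑f)ᶜ ≃ Fin M := by
  apply Fintype.equivFinOfCardEq
  rw [Fintype.card_compl_set, Set.card_range_of_injective f.injective, Fintype.card_fin]
  simp

/-- General involution/fixCard transfer along a glued permutation. -/
lemma glue_invol_fix' {α : Type*} [Fintype α] {M' K : ℕ} (f : α ↪ Fin M')
    (σ : Equiv.Perm α) (hσ : σ * σ = 1) (hfixσ : fixc σ = 0)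
    (e : ↥(Set.range ⇑f)ᶜ ≃ Fin K) (G' : Equiv.Perm (Fin K)) (hG' : G' * G' = 1) :
    glue f σ (e.permCongr.symm G') * glue f σ (e.permCongr.symm G') = 1 ∧
      fixCard (glue f σ (e.permCongr.symm G')) = fixCard G' := by
  constructor
  · rw [glue_mul, hσ]
    have h1 : e.permCongr.symm G' * e.permCongr.symm G' = e.permCongr.symm (G' * G') := by
      rw [Equiv.permCongr_symm, ← _root_.permCongr_mul]
    rw [h1, hG']
    have h2 : e.permCongr.symm 1 = 1 := by
      rw [Equiv.permCongr_symm, permCongr_one']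
    rw [h2, glue_one]
  · rw [fixCard_eq_fixc, fixc_glue, hfixσ, zero_add, fixCard_eq_fixc,
      Equiv.permCongr_symm, fixc_permCongr]

/-- Forward map of the one-involution bijection. -/
noncomputable def psi2 (g : ℕ) (p : (Bool ↪ Fin (M + 2)) × ↥(InvSet g M)) :
    {q : Equiv.Perm (Fin (M + 2)) × Fin (M + 2) //
      q.1 ∈ InvSet g (M + 2) ∧ q.1 q.2 ≠ q.2} :=
  ⟨(glue p.1 bPerm ((eC2 p.1).permCongr.symm p.2.1), p.1 false), by
    obtain ⟨hG'2, hfixG'⟩ := p.2.2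
    obtain ⟨h1, h2⟩ := glue_invol_fix' p.1 bPerm bPerm_sq fixc_bPerm (eC2 p.1) _ hG'2
    refine ⟨⟨h1, h2.trans hfixG'⟩, ?_⟩
    have : glue p.1 bPerm ((eC2 p.1).permCongr.symm p.2.1) (p.1 false) = p.1 true := by
      rw [glue_apply_inl]; rfl
    rw [this]
    intro hc
    have := p.1.injective hc
    simp at this⟩

lemma psi2_injective (g : ℕ) : Function.Injective (psi2 (M := M) g) := by
  rintro ⟨f₁, ⟨G₁, hp₁⟩⟩ ⟨f₂, ⟨G₂, hp₂⟩⟩ heq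
  have hval := congrArg Subtype.val heq
  have hG : glue f₁ bPerm ((eC2 f₁).permCongr.symm G₁) =
      glue f₂ bPerm ((eC2 f₂).permCongr.symm G₂) := congrArg Prod.fst hval
  have hx : f₁ false = f₂ false := congrArg Prod.snd hval
  have hxt : f₁ true = f₂ true := by
    have e₁ : glue f₁ bPerm ((eC2 f₁).permCongr.symm G₁) (f₁ false) = f₁ true := by
      rw [glue_apply_inl]; rfl
    have e₂ : glue f₂ bPerm ((eC2 f₂).permCongr.symm G₂) (f₂ false) = f₂ true := by
      rw [glue_apply_inl]; rfl
    rw [← e₁, ← e₂, hG, hx]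
  have hf : f₁ = f₂ := by
    apply DFunLike.ext
    intro b
    cases b
    · exact hx
    · exact hxt
  subst hf
  have hG' : G₁ = G₂ := by
    have := (glue_left_injective f₁ hG).2
    exact (eC2 f₁).permCongr.symm.injective this
  subst hG'
  rfl

lemma psi2_surjective (g : ℕ) : Function.Surjective (psi2 (M := M) g) := by
  rintro ⟨⟨G, x⟩, ⟨hG2, hfixG⟩, hGx⟩
  replace hG2 : G * G = 1 := hG2
  replace hfixG : fixCard G = g := hfixG
  replace hGx : G x ≠ x := hGx
  have hGG : ∀ z, G (G z) = z := fun z => by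
    have : (G * G) z = (1 : Equiv.Perm (Fin (M + 2))) z := by rw [hG2]
    simpa [Equiv.Perm.mul_apply] using this
  set F : Bool → Fin (M + 2) := fun b => if b then G x else x with hF
  have hFinj : Function.Injective F := by
    intro b₁ b₂ hb
    cases b₁ <;> cases b₂ <;> simp [hF] at hb ⊢
    · exact hGx hb.symm
    · exact hGx hb
  set FEmb : Bool ↪ Fin (M + 2) := ⟨F, hFinj⟩ with hFEmb
  have hGF : ∀ b, G (FEmb b) = FEmb (bPerm b) := by
    intro b
    cases b
    · rfl
    · show G (G x) = x
      exact hGG x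
  set τ := restrictCompl FEmb G bPerm hGF with hτ
  have hGglue : glue FEmb bPerm τ = G := restrictCompl_spec FEmb G bPerm hGF
  have hτ2 : τ * τ = 1 := by
    have h1 : glue FEmb (bPerm * bPerm) (τ * τ) = glue FEmb 1 1 := by
      rw [← glue_mul, hGglue, hG2, glue_one]
    rw [bPerm_sq] at h1
    exact (glue_left_injective FEmb h1).2
  have hfixτ : fixc τ = g := by
    have h1 : fixCard G = fixc bPerm + fixc τ := by
      rw [← hGglue, fixCard_eq_fixc, fixc_glue]
    rw [hfixG, fixc_bPerm, zero_add] at h1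
    exact h1.symm
  set G' := (eC2 FEmb).permCongr τ with hG'
  have hmem : G' ∈ InvSet g M := by
    constructor
    · show (eC2 FEmb).permCongr τ * (eC2 FEmb).permCongr τ = 1
      rw [← _root_.permCongr_mul, hτ2, permCongr_one']
    · show fixCard ((eC2 FEmb).permCongr τ) = g
      rw [fixCard_eq_fixc, fixc_permCongr, hfixτ]
  refine ⟨⟨FEmb, ⟨G', hmem⟩⟩, ?_⟩
  apply Subtype.ext
  show (glue FEmb bPerm ((eC2 FEmb).permCongr.symm G'), FEmb false) = (G, x)
  have hdown : (eC2 FEmb).permCongr.symm G' = τ := by rw [hG', Equiv.symm_apply_apply]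
  rw [hdown, hGglue]
  rfl

/-- The key recurrence for counting involutions with a given number of fixed points. -/
lemma invSet_rec (g M : ℕ) :
    Nat.card (InvSet g (M + 2)) * ((M + 2) - g) =
      (M + 2) * (M + 1) * Nat.card (InvSet g M) := by
  -- compute the cardinality of the marked space in two ways
  have hS : Nat.card {q : Equiv.Perm (Fin (M + 2)) × Fin (M + 2) //
      q.1 ∈ InvSet g (M + 2) ∧ q.1 q.2 ≠ q.2} =
      Nat.card (InvSet g (M + 2)) * ((M + 2) - g) := by
    have e : {q : Equiv.Perm (Fin (M + 2)) × Fin (M + 2) //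
        q.1 ∈ InvSet g (M + 2) ∧ q.1 q.2 ≠ q.2} ≃
        Σ G : ↥(InvSet g (M + 2)), {x : Fin (M + 2) // (G : Equiv.Perm (Fin (M + 2))) x ≠ x} :=
      { toFun := fun q => ⟨⟨q.1.1, q.2.1⟩, ⟨q.1.2, q.2.2⟩⟩
        invFun := fun s => ⟨(s.1.1, s.2.1), s.1.2, s.2.2⟩
        left_inv := fun q => rfl
        right_inv := fun s => rfl }
    rw [Nat.card_congr e, Nat.card_eq_fintype_card, Fintype.card_sigma]
    have hterm : ∀ G : ↥(InvSet g (M + 2)),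
        Fintype.card {x : Fin (M + 2) // (G : Equiv.Perm (Fin (M + 2))) x ≠ x} =
          (M + 2) - g := by
      rintro ⟨G, hG2, hfixG⟩
      have h1 : Fintype.card {x : Fin (M + 2) // ¬ (G x = x)} =
          Fintype.card (Fin (M + 2)) - Fintype.card {x : Fin (M + 2) // G x = x} :=
        Fintype.card_subtype_compl _
      have h2 : Fintype.card {x : Fin (M + 2) // G x = x} = g := by
        rw [← Nat.card_eq_fintype_card]
        exact hfixG
      rw [h1, h2, Fintype.card_fin]
    rw [Finset.sum_congr rfl (fun G _ => hterm G), Finset.sum_const, Finset.card_univ,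
      Nat.card_eq_fintype_card, smul_eq_mul]
  rw [← hS, ← Nat.card_eq_of_bijective (psi2 (M := M) g)
    ⟨psi2_injective g, psi2_surjective g⟩, Nat.card_prod,
    Nat.card_eq_fintype_card (α := Bool ↪ Fin (M + 2)), Fintype.card_embedding_eq,
    Fintype.card_fin, Fintype.card_bool]
  congr 1
  rw [Nat.descFactorial_succ, Nat.descFactorial_one]
  simp [Nat.add_sub_cancel]
  ring

lemma invSet_zero_of_gt {g M : ℕ} (hgM : M < g) : Nat.card (InvSet g M) = 0 := by
  have : IsEmpty ↥(InvSet g M) := by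
    refine ⟨fun ⟨G, hG2, hfix⟩ => ?_⟩
    have := fixc_le G
    rw [← fixCard_eq_fixc, hfix, Fintype.card_fin] at this
    omega
  exact Nat.card_of_isEmpty

lemma invSet_nonempty {g M : ℕ} (hgM : g ≤ M) (hpar : Even (M - g)) :
    0 < Nat.card (InvSet g M) := by
  obtain ⟨m, hm⟩ := hpar
  have hm' : M = g + 2 * m := by omega
  have hcard : Fintype.card (Fin m × Bool) ≤ Fintype.card (Fin M) := by
    simp [Fintype.card_prod]
    omega
  obtain ⟨f⟩ := Function.Embedding.nonempty_of_card_le hcard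
  have hmem : glue f (gPerm m) 1 ∈ InvSet g M := by
    constructor
    · rw [glue_mul, gPerm_sq, mul_one, glue_one]
    · rw [fixCard_eq_fixc, fixc_glue, fixc_gPerm, zero_add, fixc_one]
      rw [Nat.card_eq_fintype_card, Fintype.card_compl_set,
        Set.card_range_of_injective f.injective, Fintype.card_fin]
      simp [Fintype.card_prod]
      omega
  have : Nonempty ↥(InvSet g M) := ⟨⟨_, hmem⟩⟩
  have hfin : Nat.card ↥(InvSet g M) ≠ 0 := Nat.card_ne_zero.2 ⟨this, inferInstance⟩
  omega

end InvolutionCount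

section Algebra

lemma invSet_rec_real (g M : ℕ) (h2 : 2 ≤ M) :
    (Nat.card (InvSet g M) : ℝ) * ((M : ℝ) - g) =
      (M : ℝ) * ((M : ℝ) - 1) * (Nat.card (InvSet g (M - 2)) : ℝ) := by
  obtain ⟨M', rfl⟩ : ∃ M', M = M' + 2 := ⟨M - 2, by omega⟩
  have hidx : M' + 2 - 2 = M' := by omega
  by_cases hg : g ≤ M' + 2
  · have hnat := invSet_rec g M'
    have hcast := congrArg (fun n : ℕ => (n : ℝ)) hnat
    push_cast [Nat.cast_sub hg] at hcast
    rw [hidx]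
    push_cast
    linear_combination hcast
  · have h1 : Nat.card (InvSet g (M' + 2)) = 0 := invSet_zero_of_gt (by omega)
    have h2' : Nat.card (InvSet g (M' + 2 - 2)) = 0 := by
      rw [hidx]
      exact invSet_zero_of_gt (by omega)
    rw [h1, h2']
    simp

lemma pairE_step (g h : ℕ) {M : ℕ} (h2 : 2 ≤ M) :
    (Nat.card (pairE g h M) : ℝ) * (((M : ℝ) - g) * ((M : ℝ) - h)) =
      ((M : ℝ) * ((M : ℝ) - 1)) ^ 2 * (Nat.card (pairE g h (M - 2)) : ℝ) := by
  rw [pairE_card_eq, pairE_card_eq]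
  push_cast
  have e1 := invSet_rec_real g M h2
  have e2 := invSet_rec_real h M h2
  set A := (Nat.card (InvSet g M) : ℝ)
  set B := (Nat.card (InvSet h M) : ℝ)
  set A' := (Nat.card (InvSet g (M - 2)) : ℝ)
  set B' := (Nat.card (InvSet h (M - 2)) : ℝ)
  linear_combination (B * ((M : ℝ) - h)) * e1 + ((M : ℝ) * ((M : ℝ) - 1) * A') * e2

lemma pairE_prod_formula (g h N : ℕ) : ∀ t : ℕ, 2 * t ≤ N →
    (Nat.card (pairE g h N) : ℝ) *
        ∏ j ∈ Finset.range t, (((N : ℝ) - 2 * j - g) * ((N : ℝ) - 2 * j - h)) =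
      (∏ j ∈ Finset.range t, (((N : ℝ) - 2 * j) * ((N : ℝ) - 2 * j - 1))) ^ 2 *
        (Nat.card (pairE g h (N - 2 * t)) : ℝ) := by
  intro t
  induction t with
  | zero => intro _; simp
  | succ t ih =>
    intro hN1
    have h2t : 2 * t ≤ N := by omega
    have ih' := ih h2t
    have hM2 : 2 ≤ N - 2 * t := by omega
    have hstep := pairE_step g h hM2
    have hcast : ((N - 2 * t : ℕ) : ℝ) = (N : ℝ) - 2 * t := by
      push_cast [Nat.cast_sub h2t]
      ring
    rw [hcast] at hstep
    have hidx : N - 2 * (t + 1) = (N - 2 * t) - 2 := by omega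
    rw [hidx, Finset.prod_range_succ, Finset.prod_range_succ]
    set P := ∏ j ∈ Finset.range t, (((N : ℝ) - 2 * j - g) * ((N : ℝ) - 2 * j - h))
    set D := ∏ j ∈ Finset.range t, (((N : ℝ) - 2 * j) * ((N : ℝ) - 2 * j - 1))
    set E := (Nat.card (pairE g h N) : ℝ)
    set E' := (Nat.card (pairE g h (N - 2 * t)) : ℝ)
    set E'' := (Nat.card (pairE g h (N - 2 * t - 2)) : ℝ)
    have hgoal : E * (P * (((N : ℝ) - 2 * t - g) * ((N : ℝ) - 2 * t - h))) =
        (D * (((N : ℝ) - 2 * t) * ((N : ℝ) - 2 * t - 1))) ^ 2 * E'' := by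
      have expand : (D * (((N : ℝ) - 2 * t) * ((N : ℝ) - 2 * t - 1))) ^ 2 =
          D ^ 2 * (((N : ℝ) - 2 * t) * ((N : ℝ) - 2 * t - 1)) ^ 2 := by ring
      rw [expand]
      calc E * (P * (((N : ℝ) - 2 * t - g) * ((N : ℝ) - 2 * t - h)))
          = (E * P) * (((N : ℝ) - 2 * t - g) * ((N : ℝ) - 2 * t - h)) := by ring
        _ = (D ^ 2 * E') * (((N : ℝ) - 2 * t - g) * ((N : ℝ) - 2 * t - h)) := by rw [ih']
        _ = D ^ 2 * (E' * (((N : ℝ) - 2 * t - g) * ((N : ℝ) - 2 * t - h))) := by ring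
        _ = D ^ 2 * ((((N : ℝ) - 2 * t) * ((N : ℝ) - 2 * t - 1)) ^ 2 * E'') := by rw [hstep]
        _ = D ^ 2 * (((N : ℝ) - 2 * t) * ((N : ℝ) - 2 * t - 1)) ^ 2 * E'' := by ring
    exact hgoal

lemma prod_range_two_mul {β : Type*} [CommMonoid β] (t : ℕ) (f : ℕ → β) :
    ∏ i ∈ Finset.range (2 * t), f i = ∏ j ∈ Finset.range t, (f (2 * j) * f (2 * j + 1)) := by
  induction t with
  | zero => simp
  | succ t ih =>
    have h1 : 2 * (t + 1) = 2 * t + 1 + 1 := by ring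
    rw [h1, Finset.prod_range_succ, Finset.prod_range_succ, ih, Finset.prod_range_succ]
    rw [mul_assoc]

lemma descFactorial_cast_prod (N t : ℕ) (h : 2 * t ≤ N) :
    (N.descFactorial (2 * t) : ℝ) =
      ∏ j ∈ Finset.range t, (((N : ℝ) - 2 * j) * ((N : ℝ) - 2 * j - 1)) := by
  rw [Nat.descFactorial_eq_prod_range, Nat.cast_prod, prod_range_two_mul]
  apply Finset.prod_congr rfl
  intro j hj
  simp only [Finset.mem_range] at hj
  have h1 : 2 * j ≤ N := by omega
  have h2 : 2 * j + 1 ≤ N := by omega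
  rw [Nat.cast_sub h1, Nat.cast_sub h2]
  push_cast
  ring

end Algebra

/-- The expected fraction of the space occupied by asymmetric `t`-cycles of `H ∘ G`
equals `(1/N)·Π_{j=0}^{t-1}(1-(g-1)/(N-(2j+1)))(1-h/(N-2j))`, which equals
`(N^{underline(2t)}/N)·#E(g,h,N-2t)/#E(g,h,N)`. -/
theorem expected_asymmetric_fraction (N t g h : ℕ)
    (ht : 1 ≤ t) (htN : 2 * t ≤ N)
    (hg : 1 ≤ g) (hgN : g ≤ N) (hh : 1 ≤ h) (hhN : h ≤ N)
    (heg : Even (N - g)) (heh : Even (N - h)) :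
    (∑ᶠ p ∈ pairE g h N, (asymCount N t p.1 p.2 : ℝ) / N) /
        (Nat.card (pairE g h N) : ℝ) =
      (1 / (N : ℝ)) *
        ∏ j ∈ Finset.range t,
          (1 - ((g : ℝ) - 1) / ((N : ℝ) - (2 * j + 1))) *
            (1 - (h : ℝ) / ((N : ℝ) - 2 * j)) ∧
    (∑ᶠ p ∈ pairE g h N, (asymCount N t p.1 p.2 : ℝ) / N) /
        (Nat.card (pairE g h N) : ℝ) =
      ((N.descFactorial (2 * t) : ℝ) / N) *
        (Nat.card (pairE g h (N - 2 * t)) : ℝ) / (Nat.card (pairE g h N) : ℝ) := by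
  have ht0 : 0 < t := ht
  have hN0 : 0 < N := by omega
  have hEpos : 0 < Nat.card (pairE g h N) := by
    rw [pairE_card_eq]
    exact Nat.mul_pos (invSet_nonempty hgN heg) (invSet_nonempty hhN heh)
  have hEne : (Nat.card (pairE g h N) : ℝ) ≠ 0 := (Nat.cast_pos.2 hEpos).ne'
  have hNne : (N : ℝ) ≠ 0 := (Nat.cast_pos.2 hN0).ne'
  -- the sum over the set of pairs
  have hsum : (∑ᶠ p ∈ pairE g h N, (asymCount N t p.1 p.2 : ℝ) / N) =
      ((N.descFactorial (2 * t) : ℝ) * (Nat.card (pairE g h (N - 2 * t)) : ℝ)) / N := by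
    rw [← Set.coe_toFinset (pairE g h N), finsum_mem_coe_finset, ← Finset.sum_div]
    congr 1
    rw [← Nat.cast_sum]
    rw [sum_asymCount N t g h ht0]
    push_cast
    ring
  have hdf : (N.descFactorial (2 * t) : ℝ) =
      ∏ j ∈ Finset.range t, (((N : ℝ) - 2 * j) * ((N : ℝ) - 2 * j - 1)) :=
    descFactorial_cast_prod N t htN
  have hclaim := pairE_prod_formula g h N t htN
  have hfactors : ∀ j ∈ Finset.range t,
      ((N : ℝ) - 2 * j) ≠ 0 ∧ ((N : ℝ) - 2 * j - 1) ≠ 0 := by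
    intro j hj
    simp only [Finset.mem_range] at hj
    have hb : 2 * j + 2 ≤ N := by omega
    have hb' : ((2 * j + 2 : ℕ) : ℝ) ≤ (N : ℝ) := Nat.cast_le.2 hb
    push_cast at hb'
    constructor <;> intro hc <;> nlinarith
  have hDne : (∏ j ∈ Finset.range t, (((N : ℝ) - 2 * j) * ((N : ℝ) - 2 * j - 1))) ≠ 0 := by
    rw [Finset.prod_ne_zero_iff]
    intro j hj
    exact mul_ne_zero (hfactors j hj).1 (hfactors j hj).2
  constructor
  · -- first formula
    rw [hsum, hdf]
    have hfac : ∀ j ∈ Finset.range t,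
        (1 - ((g : ℝ) - 1) / ((N : ℝ) - (2 * j + 1))) * (1 - (h : ℝ) / ((N : ℝ) - 2 * j)) =
          (((N : ℝ) - 2 * j - g) * ((N : ℝ) - 2 * j - h)) /
            (((N : ℝ) - 2 * j) * ((N : ℝ) - 2 * j - 1)) := by
      intro j hj
      obtain ⟨hne1, hne2⟩ := hfactors j hj
      have hne2' : ((N : ℝ) - (2 * j + 1)) ≠ 0 := by
        intro hc; apply hne2; linarith
      field_simp
      ring
    rw [Finset.prod_congr rfl hfac, Finset.prod_div_distrib]
    have hkey : (∏ j ∈ Finset.range t, (((N : ℝ) - 2 * j - g) * ((N : ℝ) - 2 * j - h))) /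
        (∏ j ∈ Finset.range t, (((N : ℝ) - 2 * j) * ((N : ℝ) - 2 * j - 1))) =
        (∏ j ∈ Finset.range t, (((N : ℝ) - 2 * j) * ((N : ℝ) - 2 * j - 1))) *
          (Nat.card (pairE g h (N - 2 * t)) : ℝ) / (Nat.card (pairE g h N) : ℝ) := by
      rw [div_eq_div_iff hDne hEne]
      linear_combination hclaim
    rw [hkey]
    ring
  · -- second formula
    rw [hsum]
    ring
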